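/- There exist a measurable function τ̄ : ℝ → ℝ with t - 3/2 ≤ τ̄(t) ≤ t for all t, and an oscillatory solution x of the negative-feedback equation x'(t) = -x(τ̄(t)) on [3/2, ∞), such that M := limsup_{t→∞} |x(t)| is finite and strictly positive, and yet for no constant c ∈ ℝ does x(t) - M·ϖ⁻(t + c) tend to 0 as t → ∞. -/

import Mathlib

open Real MeasureTheory Filter Set

noncomputable section

/-- `x` is the solution of `x'(t) = -x(t-τ)` with `x ≡ 1` on `(-∞,0]`:
`x(t) = 1 - ∫_0^t x(s-τ) ds` for `t ≥ 0`. -/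
def IsXSol (τ : ℝ) (x : ℝ → ℝ) : Prop :=
  Continuous x ∧ (∀ t ≤ (0:ℝ), x t = 1) ∧
    ∀ t ≥ (0:ℝ), x t = 1 - ∫ s in (0:ℝ)..t, x (s - τ)

/-- The first positive root of a function. -/
noncomputable def firstRoot (x : ℝ → ℝ) : ℝ := sInf {t : ℝ | 0 < t ∧ x t = 0}

/-- `ψ` is the solution of `ψ'(t) = max{x_τ(ϱ(τ)+t-τ), ψ(t)}` on `[0,τ]`,
`ψ'(t) = ψ(t)` on `[τ,∞)`, `ψ(0) = 0`. -/
def IsPsiSol (τ ρ : ℝ) (xτ ψ : ℝ → ℝ) : Prop :=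
  ContinuousOn ψ (Ici (0:ℝ)) ∧ ψ 0 = 0 ∧
    (∀ t ∈ Icc (0:ℝ) τ, ψ t = ∫ s in (0:ℝ)..t, max (xτ (ρ + s - τ)) (ψ s)) ∧
    (∀ t ≥ τ, ψ t = ψ τ + ∫ s in τ..t, ψ s)

/-- A (continuous, integrated-form) solution of the delay equation
`x'(t) = p(t) x(τ̄(t))` on `[t₀,∞)`. -/
def IsDelaySolution (p τd : ℝ → ℝ) (t₀ : ℝ) (x : ℝ → ℝ) : Prop :=
  Continuous x ∧ ∀ t ≥ t₀, x t = x t₀ + ∫ s in t₀..t, p s * x (τd s)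

/-- `x` is `α`-oscillating: eventually every interval on which `x` has no zero
has length at most `α`. -/
def AlphaOscillating (α : ℝ) (x : ℝ → ℝ) : Prop :=
  ∃ T : ℝ, ∀ a b : ℝ, T ≤ a → a < b → (∀ t ∈ Ioo a b, x t ≠ 0) → b - a ≤ α

/-- `x` is oscillatory: it has arbitrarily large zeros. -/
def Oscillatory (x : ℝ → ℝ) : Prop := ∀ T : ℝ, ∃ t ≥ T, x t = 0


namespace Ctr

/-- profile: shifted copy of ϖ⁻ on `[5/2, 15/2]`. -/
def P (u : ℝ) : ℝ :=
  if u < 4 then u - 7/2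
  else if u < 5 then 1/2 + (u - 4) - (u - 4)^2/2
  else if u < 13/2 then 6 - u
  else -1/2 - (u - 13/2) + (u - 13/2)^2/2

def cc (k : ℕ) : ℝ := ∑ i ∈ Finset.range k, 1/((i:ℝ) + 3)
def MM (k : ℕ) : ℝ := ∏ i ∈ Finset.range k, (1 - 1/(2 * ((i:ℝ) + 3)^2))
def EE (k : ℕ) : ℝ := 5 * k + 5/2 - cc k

lemma cc_succ (k : ℕ) : cc (k+1) = cc k + 1/((k:ℝ)+3) := by
  simp [cc, Finset.sum_range_succ]

lemma cc_zero : cc 0 = 0 := by simp [cc]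

lemma kpos (k : ℕ) : (0:ℝ) < 1/((k:ℝ)+3) := by positivity

lemma kle (k : ℕ) : 1/((k:ℝ)+3) ≤ 1/3 := by
  rw [div_le_div_iff₀ (by positivity) (by norm_num)]
  have : (0:ℝ) ≤ (k:ℝ) := Nat.cast_nonneg k
  linarith

lemma cc_nonneg (k : ℕ) : 0 ≤ cc k := by
  apply Finset.sum_nonneg; intro i _; positivity

lemma cc_le (k : ℕ) : cc k ≤ (k:ℝ)/3 := by
  induction k with
  | zero => simp [cc_zero]
  | succ n ih =>
    rw [cc_succ]; push_cast
    have := kle n; linarith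

lemma cc_mono : Monotone cc := by
  apply monotone_nat_of_le_succ
  intro n; rw [cc_succ]; have := kpos n; linarith

lemma MM_succ (k : ℕ) : MM (k+1) = MM k * (1 - 1/(2 * ((k:ℝ)+3)^2)) := by
  simp [MM, Finset.prod_range_succ]

lemma MM_bounds (k : ℕ) : 3/4 ≤ MM k ∧ MM k ≤ 1 := by
  have key : ∀ k : ℕ, 3/4 + 1/(2*((k:ℝ)+2)) ≤ MM k ∧ MM k ≤ 1 := by
    intro k
    induction k with
    | zero => constructor <;> norm_num [MM]
    | succ n ih =>
      obtain ⟨h1, h2⟩ := ih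
      have hn : (0:ℝ) ≤ (n:ℝ) := Nat.cast_nonneg n
      have hcast : ((n:ℝ) + 1 + 2) = (n:ℝ) + 3 := by ring
      have hA : (0:ℝ) < 1/(2*((n:ℝ)+2)) := by positivity
      have hB : (0:ℝ) < 1/(2*((n:ℝ)+3)) := by positivity
      have hC : (0:ℝ) < 1/(2*((n:ℝ)+3)^2) := by positivity
      have hAq : 1/(2*((n:ℝ)+2)) ≤ 1/4 := by
        rw [div_le_div_iff₀ (by positivity) (by norm_num)]; linarith
      have hCq : 1/(2*((n:ℝ)+3)^2) ≤ 1/18 := by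
        rw [div_le_div_iff₀ (by positivity) (by norm_num)]; nlinarith
      have key2 : 1/(2*((n:ℝ)+3)^2) ≤ 1/(2*((n:ℝ)+2)) - 1/(2*((n:ℝ)+3)) := by
        rw [div_sub_div _ _ (by positivity) (by positivity),
          div_le_div_iff₀ (by positivity) (by positivity)]
        nlinarith
      have hMn : (3:ℝ)/4 ≤ MM n := by linarith
      rw [MM_succ]; push_cast; rw [hcast]
      constructor
      · nlinarith
      · nlinarith
  obtain ⟨h1, h2⟩ := key k
  have : (0:ℝ) < 1/(2*((k:ℝ)+2)) := by positivity
  exact ⟨by linarith, h2⟩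

lemma MM_pos (k : ℕ) : 0 < MM k := lt_of_lt_of_le (by norm_num) (MM_bounds k).1
lemma MM_le_one (k : ℕ) : MM k ≤ 1 := (MM_bounds k).2

lemma EE_zero : EE 0 = 5/2 := by simp [EE, cc_zero]

lemma EE_succ (k : ℕ) : EE (k+1) = EE k + (5 - 1/((k:ℝ)+3)) := by
  simp only [EE, cc_succ]; push_cast; ring

lemma EE_step (k : ℕ) : EE k + 4 ≤ EE (k+1) := by
  rw [EE_succ]; have := kle k; linarith

lemma EE_ge (k : ℕ) : 4 * (k:ℝ) + 5/2 ≤ EE k := by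
  have := cc_le k
  simp only [EE]
  have : cc k ≤ (k:ℝ) := le_trans (cc_le k) (by have : (0:ℝ) ≤ (k:ℝ) := Nat.cast_nonneg k; linarith)
  linarith

lemma EE_mono : Monotone EE := by
  apply monotone_nat_of_le_succ
  intro n; have := EE_step n; linarith

lemma cyc_ex (t : ℝ) : ∃ k : ℕ, t < EE (k + 1) := by
  obtain ⟨n, hn⟩ := exists_nat_gt t
  exact ⟨n, lt_of_lt_of_le hn (by have := EE_ge (n+1); push_cast at this ⊢; linarith)⟩

open Classical in
def cyc (t : ℝ) : ℕ := Nat.find (cyc_ex t)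

lemma cyc_lt (t : ℝ) : t < EE (cyc t + 1) := Nat.find_spec (cyc_ex t)

lemma cyc_le {t : ℝ} (h : 5/2 ≤ t) : EE (cyc t) ≤ t := by
  rcases Nat.eq_zero_or_pos (cyc t) with h0 | h0
  · rw [h0, EE_zero]; exact h
  · have hlt : cyc t - 1 < cyc t := by omega
    have := Nat.find_min (cyc_ex t) hlt
    push_neg at this
    have heq : cyc t - 1 + 1 = cyc t := by omega
    rwa [heq] at this

lemma cyc_eq {t : ℝ} {k : ℕ} (h1 : EE k ≤ t) (h2 : t < EE (k+1)) : cyc t = k := by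
  have hle : cyc t ≤ k := Nat.find_le h2
  rcases Nat.lt_or_ge (cyc t) k with h | h
  · exfalso
    have : EE (cyc t + 1) ≤ EE k := EE_mono (by omega : cyc t + 1 ≤ k)
    have := cyc_lt t
    linarith
  · omega

lemma cyc_mono : Monotone cyc := by
  intro s t hst
  exact Nat.find_mono (fun n hn => lt_of_le_of_lt hst hn)


def uu (s : ℝ) : ℝ := s - 5 * (cyc s : ℝ) + cc (cyc s)

lemma uu_eq {s : ℝ} {k : ℕ} (h : cyc s = k) : uu s = s - EE k + 5/2 := by
  simp only [uu, h, EE]; ring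

def D (s : ℝ) : ℝ :=
  if s < 5/2 then max (s - 5/2) (-1)
  else if uu s < 4 then MM (cyc s)
  else if uu s < 5 then MM (cyc s) * (5 - uu s)
  else if uu s < 13/2 then -MM (cyc s)
  else MM (cyc s) * (uu s - 15/2)

def td (t : ℝ) : ℝ :=
  if t < 3/2 then t
  else if t < 5/2 then t - 3/2
  else if uu t < 4 then EE (cyc t)
  else if uu t < 5 then t - 3/2
  else if uu t < 13/2 then EE (cyc t) + 5/2
  else t - 3/2

def H (t : ℝ) : ℝ := if t ≤ -3/2 then 0 else P (t + 5)

def xx (t : ℝ) : ℝ := if t ≤ 3/2 then H t else -1/2 + ∫ s in (3/2:ℝ)..t, D s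

lemma uu_mem {s : ℝ} (h : 5/2 ≤ s) : 5/2 ≤ uu s ∧ uu s < 15/2 := by
  have h1 := cyc_le h
  have h2 := cyc_lt s
  have h3 := EE_step (cyc s)
  rw [uu_eq rfl]
  constructor
  · linarith
  · have := EE_succ (cyc s); have := kpos (cyc s); have := kle (cyc s)
    linarith

lemma D_bdd (s : ℝ) : |D s| ≤ 1 := by
  rw [abs_le]
  unfold D
  split_ifs with c1 c2 c3 c4
  · constructor
    · exact le_trans (by norm_num) (le_max_right _ _)
    · apply max_le <;> linarith
  all_goals {
    have hu := uu_mem (not_lt.mp c1)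
    have h1 := MM_pos (cyc s)
    have h2 := MM_le_one (cyc s)
    constructor <;> nlinarith
  }

lemma cyc_meas : Measurable cyc := cyc_mono.measurable

lemma MMc_meas : Measurable fun s => MM (cyc s) :=
  (measurable_from_top : Measurable MM).comp cyc_meas
lemma ccc_meas : Measurable fun s => cc (cyc s) :=
  (measurable_from_top : Measurable cc).comp cyc_meas
lemma EEc_meas : Measurable fun s => EE (cyc s) :=
  (measurable_from_top : Measurable EE).comp cyc_meas
lemma castc_meas : Measurable fun s => ((cyc s : ℕ) : ℝ) :=
  (measurable_from_top : Measurable fun n : ℕ => ((n:ℕ):ℝ)).comp cyc_meas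

lemma uu_meas : Measurable uu := by
  unfold uu
  exact (measurable_id.sub (measurable_const.mul castc_meas)).add ccc_meas

lemma D_meas : Measurable D := by
  unfold D
  apply Measurable.ite (measurableSet_lt measurable_id measurable_const)
  · exact (measurable_id.sub measurable_const).max measurable_const
  apply Measurable.ite (measurableSet_lt uu_meas measurable_const) MMc_meas
  apply Measurable.ite (measurableSet_lt uu_meas measurable_const)
  · exact MMc_meas.mul (measurable_const.sub uu_meas)
  apply Measurable.ite (measurableSet_lt uu_meas measurable_const) MMc_meas.neg
  exact MMc_meas.mul (uu_meas.sub measurable_const)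

lemma td_meas : Measurable td := by
  unfold td
  apply Measurable.ite (measurableSet_lt measurable_id measurable_const) measurable_id
  apply Measurable.ite (measurableSet_lt measurable_id measurable_const)
    (measurable_id.sub measurable_const)
  apply Measurable.ite (measurableSet_lt uu_meas measurable_const) EEc_meas
  apply Measurable.ite (measurableSet_lt uu_meas measurable_const)
    (measurable_id.sub measurable_const)
  apply Measurable.ite (measurableSet_lt uu_meas measurable_const)
    (EEc_meas.add measurable_const)
  exact measurable_id.sub measurable_const

lemma D_intable (a b : ℝ) : IntervalIntegrable D volume a b := by
  rw [intervalIntegrable_iff]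
  apply MeasureTheory.Integrable.mono' (g := fun _ => (1:ℝ))
  · exact MeasureTheory.integrableOn_const measure_Ioc_lt_top.ne
  · exact (D_meas.aestronglyMeasurable).restrict
  · exact ae_of_all _ fun s => by simpa using D_bdd s

lemma xInt {t : ℝ} (h : 3/2 ≤ t) : xx t = -1/2 + ∫ s in (3/2:ℝ)..t, D s := by
  rcases eq_or_lt_of_le h with h' | h'
  · rw [← h', xx, if_pos le_rfl, intervalIntegral.integral_same]
    norm_num [H, P]
  · rw [xx, if_neg (by linarith)]

lemma P_cont : Continuous P := by
  have c2 : Continuous fun u : ℝ =>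
      if u < 13/2 then 6 - u else -1/2 - (u - 13/2) + (u - 13/2)^2/2 := by
    apply Continuous.if _ (by fun_prop) (by fun_prop)
    intro a ha
    rw [show {x : ℝ | x < (13/2:ℝ)} = Iio (13/2) from rfl, frontier_Iio] at ha
    rw [Set.mem_singleton_iff.mp ha]; norm_num
  have c1 : Continuous fun u : ℝ =>
      if u < 5 then 1/2 + (u - 4) - (u - 4)^2/2
      else if u < 13/2 then 6 - u else -1/2 - (u - 13/2) + (u - 13/2)^2/2 := by
    apply Continuous.if _ (by fun_prop) c2
    intro a ha
    rw [show {x : ℝ | x < (5:ℝ)} = Iio 5 from rfl, frontier_Iio] at ha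
    rw [Set.mem_singleton_iff.mp ha]; norm_num
  unfold P
  apply Continuous.if _ (by fun_prop) c1
  intro a ha
  rw [show {x : ℝ | x < (4:ℝ)} = Iio 4 from rfl, frontier_Iio] at ha
  rw [Set.mem_singleton_iff.mp ha]; norm_num

lemma H_cont : Continuous H := by
  unfold H
  apply Continuous.if_le continuous_const (P_cont.comp (by fun_prop))
    continuous_id continuous_const
  intro t ht
  simp only [id] at ht
  rw [Function.comp_apply, ht]; norm_num [P]

lemma x_cont : Continuous xx := by
  unfold xx
  apply Continuous.if_le H_cont _ continuous_id continuous_const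
  · intro t ht
    simp only [id] at ht
    rw [ht, intervalIntegral.integral_same]
    norm_num [H, P]
  · exact continuous_const.add (intervalIntegral.continuous_primitive D_intable _)


lemma int_congr {f g : ℝ → ℝ} {a b : ℝ} (hab : a ≤ b)
    (h : ∀ s, a < s → s < b → f s = g s) :
    ∫ s in a..b, f s = ∫ s in a..b, g s := by
  apply intervalIntegral.integral_congr_ae
  rw [ae_iff]
  apply measure_mono_null (t := {b}) ?_ Real.volume_singleton
  · intro x hx
    simp only [Set.mem_setOf_eq, Classical.not_imp] at hx
    obtain ⟨hmem, hne⟩ := hx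
    rw [Set.uIoc_of_le hab] at hmem
    rcases lt_or_eq_of_le hmem.2 with h3 | h3
    · exact absurd (h x hmem.1 h3) hne
    · exact h3

lemma int_linear (α β p q : ℝ) :
    ∫ s in p..q, (α + β * s) = α*(q - p) + β * (q^2 - p^2)/2 := by
  rw [intervalIntegral.integral_add intervalIntegrable_const
    (intervalIntegral.intervalIntegrable_id.const_mul β)]
  rw [intervalIntegral.integral_const, intervalIntegral.integral_const_mul, integral_id]
  simp [smul_eq_mul]; ring


lemma EE_ge52 (k : ℕ) : (5/2:ℝ) ≤ EE k := by
  have h := EE_ge k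
  have h2 : (0:ℝ) ≤ (k:ℝ) := Nat.cast_nonneg k
  linarith

lemma xdiff {a t : ℝ} (h1 : 3/2 ≤ a) (h2 : a ≤ t) : xx t = xx a + ∫ s in a..t, D s := by
  have hadd := intervalIntegral.integral_add_adjacent_intervals (D_intable (3/2) a) (D_intable a t)
  rw [xInt h1, xInt (h1.trans h2), ← hadd]; ring

lemma xH {t : ℝ} (h1 : 3/2 ≤ t) (h2 : t ≤ 5/2) : xx t = P (t + 5) := by
  rw [xInt h1]
  have : (∫ s in (3/2:ℝ)..t, D s) = ∫ s in (3/2:ℝ)..t, (-(5/2) + 1 * s) := by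
    apply int_congr h1
    intro s hs1 hs2
    unfold D
    rw [if_pos (by linarith)]
    rw [max_eq_left (by linarith)]; ring
  rw [this, int_linear]
  unfold P
  rw [if_neg (by push_neg; linarith), if_neg (by push_neg; linarith),
    if_neg (by push_neg; linarith)]
  ring

lemma key (k : ℕ) (hk : xx (EE k) = -(MM k)) :
    ∀ t, EE k ≤ t → t ≤ EE (k+1) → xx t = MM k * P (t - EE k + 5/2) := by
  have h52 := EE_ge52 k
  have h32 : (3/2:ℝ) ≤ EE k := by linarith
  have hstep := EE_step k
  have hsucc := EE_succ k
  have hkp := kpos k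
  have hk3 := kle k
  have step1 : ∀ t, EE k ≤ t → t ≤ EE k + 3/2 → xx t = -(MM k) + MM k * (t - EE k) := by
    intro t h1 h2
    rw [xdiff h32 h1, hk]
    have hI : (∫ s in (EE k)..t, D s) = ∫ s in (EE k)..t, (MM k + 0 * s) := by
      apply int_congr h1
      intro s hs1 hs2
      have hc : cyc s = k := cyc_eq (by linarith) (by linarith)
      have hu : uu s = s - EE k + 5/2 := uu_eq hc
      unfold D
      rw [if_neg (by push_neg; linarith), if_pos (by rw [hu]; linarith), hc]
      ring
    rw [hI, int_linear]; ring
  have val1 : xx (EE k + 3/2) = -(MM k) + MM k * (3/2) := by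
    rw [step1 _ (by linarith) le_rfl]; ring
  have step2 : ∀ t, EE k + 3/2 ≤ t → t ≤ EE k + 5/2 →
      xx t = MM k * (1/2 + (t - EE k - 3/2) - (t - EE k - 3/2)^2/2) := by
    intro t h1 h2
    rw [xdiff (by linarith) h1, val1]
    have hI : (∫ s in (EE k + 3/2)..t, D s)
        = ∫ s in (EE k + 3/2)..t, (MM k * (EE k + 5/2) + (-(MM k)) * s) := by
      apply int_congr h1
      intro s hs1 hs2
      have hc : cyc s = k := cyc_eq (by linarith) (by linarith)
      have hu : uu s = s - EE k + 5/2 := uu_eq hc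
      unfold D
      rw [if_neg (by push_neg; linarith), if_neg (by push_neg; rw [hu]; linarith),
        if_pos (by rw [hu]; linarith), hc, hu]
      ring
    rw [hI, int_linear]; ring
  have val2 : xx (EE k + 5/2) = MM k * 1 := by
    rw [step2 _ (by linarith) le_rfl]; ring
  have step3 : ∀ t, EE k + 5/2 ≤ t → t ≤ EE k + 4 →
      xx t = MM k * (6 - (t - EE k + 5/2)) := by
    intro t h1 h2
    rw [xdiff (by linarith) h1, val2]
    have hI : (∫ s in (EE k + 5/2)..t, D s)
        = ∫ s in (EE k + 5/2)..t, (-(MM k) + 0 * s) := by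
      apply int_congr h1
      intro s hs1 hs2
      have hc : cyc s = k := cyc_eq (by linarith) (by linarith)
      have hu : uu s = s - EE k + 5/2 := uu_eq hc
      unfold D
      rw [if_neg (by push_neg; linarith), if_neg (by push_neg; rw [hu]; linarith),
        if_neg (by push_neg; rw [hu]; linarith), if_pos (by rw [hu]; linarith), hc]
      ring
    rw [hI, int_linear]; ring
  have val3 : xx (EE k + 4) = MM k * (-1/2) := by
    rw [step3 _ (by linarith) le_rfl]; ring
  have step4 : ∀ t, EE k + 4 ≤ t → t ≤ EE (k+1) →
      xx t = MM k * (-1/2 - (t - EE k - 4) + (t - EE k - 4)^2/2) := by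
    intro t h1 h2
    rw [xdiff (by linarith) h1, val3]
    have hI : (∫ s in (EE k + 4)..t, D s)
        = ∫ s in (EE k + 4)..t, ((-(MM k)) * (EE k + 5) + MM k * s) := by
      apply int_congr h1
      intro s hs1 hs2
      have hc : cyc s = k := cyc_eq (by linarith) (by linarith)
      have hu : uu s = s - EE k + 5/2 := uu_eq hc
      unfold D
      rw [if_neg (by push_neg; linarith), if_neg (by push_neg; rw [hu]; linarith),
        if_neg (by push_neg; rw [hu]; linarith), if_neg (by push_neg; rw [hu]; linarith),
        hc, hu]
      ring
    rw [hI, int_linear]; ring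
  intro t h1 h2
  rcases lt_or_ge t (EE k + 3/2) with hA | hA
  · rw [step1 t h1 hA.le]
    unfold P
    rw [if_pos (by linarith)]; ring
  rcases lt_or_ge t (EE k + 5/2) with hB | hB
  · rw [step2 t hA hB.le]
    unfold P
    rw [if_neg (by push_neg; linarith), if_pos (by linarith)]; ring
  rcases lt_or_ge t (EE k + 4) with hC | hC
  · rw [step3 t hB hC.le]
    unfold P
    rw [if_neg (by push_neg; linarith), if_neg (by push_neg; linarith),
      if_pos (by linarith)]
    try ring
  · rw [step4 t hC h2]
    unfold P
    rw [if_neg (by push_neg; linarith), if_neg (by push_neg; linarith),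
      if_neg (by push_neg; linarith)]; ring

lemma xE : ∀ k, xx (EE k) = -(MM k) := by
  intro k
  induction k with
  | zero =>
    rw [EE_zero, xH (by norm_num) le_rfl]
    norm_num [P, MM]
  | succ n ih =>
    have := key n ih (EE (n+1)) (by have := EE_step n; linarith) le_rfl
    have hsucc := EE_succ n
    have hkp := kpos n
    have hk3 := kle n
    have hne : ((n:ℝ)+3) ≠ 0 := by positivity
    rw [this, hsucc, MM_succ]
    unfold P
    rw [if_neg (by push_neg; linarith), if_neg (by push_neg; linarith),
      if_neg (by push_neg; linarith)]
    field_simp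
    ring

lemma xC (k : ℕ) : ∀ t, EE k ≤ t → t ≤ EE (k+1) → xx t = MM k * P (t - EE k + 5/2) :=
  key k (xE k)


lemma P_bdd {u : ℝ} (h1 : 5/2 ≤ u) (h2 : u ≤ 15/2) : |P u| ≤ 1 := by
  rw [abs_le]
  unfold P
  split_ifs with p1 p2 p3 <;> constructor <;> nlinarith

lemma x_bdd (t : ℝ) : |xx t| ≤ 1 := by
  rcases le_or_gt t (3/2) with h | h
  · rw [xx, if_pos h]
    unfold H
    split_ifs with h1
    · norm_num
    · push_neg at h1
      exact P_bdd (by linarith) (by linarith)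
  rcases le_or_gt t (5/2) with h2 | h2
  · rw [xH h.le h2]
    exact P_bdd (by linarith) (by linarith)
  · have hlt := cyc_lt t
    have hle := cyc_le h2.le
    have hsucc := EE_succ (cyc t)
    have hkp := kpos (cyc t)
    rw [xC (cyc t) t hle hlt.le, abs_mul]
    have hM := MM_pos (cyc t)
    have hM1 := MM_le_one (cyc t)
    have : |MM (cyc t)| ≤ 1 := by rw [abs_of_pos hM]; exact hM1
    have hP : |P (t - EE (cyc t) + 5/2)| ≤ 1 := P_bdd (by linarith) (by linarith)
    calc |MM (cyc t)| * |P (t - EE (cyc t) + 5/2)| ≤ 1 * 1 := by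
          apply mul_le_mul this hP (abs_nonneg _) (by norm_num)
      _ = 1 := by norm_num

lemma td_window (t : ℝ) : t - 3/2 ≤ td t ∧ td t ≤ t := by
  unfold td
  split_ifs with c1 c2 c3 c4 c5
  · exact ⟨by linarith, le_rfl⟩
  · exact ⟨le_rfl, by linarith⟩
  all_goals {
    push_neg at c1 c2
    have hu := uu_mem c2
    have he : uu t = t - EE (cyc t) + 5/2 := uu_eq rfl
    constructor <;> [skip; skip] <;> linarith
  }

lemma τdD {s : ℝ} (h : 3/2 ≤ s) : xx (td s) = -(D s) := by
  rcases lt_or_ge s (5/2) with h2 | h2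
  · rw [td, if_neg (by push_neg; linarith), if_pos h2]
    rw [D, if_pos h2, max_eq_left (by linarith)]
    rw [xx, if_pos (by linarith)]
    rw [H, if_neg (by push_neg; linarith)]
    unfold P
    rw [if_neg (by push_neg; linarith), if_neg (by push_neg; linarith),
      if_pos (by linarith)]
    ring
  · have hle := cyc_le h2
    have hlt := cyc_lt s
    have hu : uu s = s - EE (cyc s) + 5/2 := uu_eq rfl
    have hum := uu_mem h2
    have hstep := EE_step (cyc s)
    have h52 := EE_ge52 (cyc s)
    rcases lt_or_ge (uu s) 4 with c3 | c3
    · rw [td, if_neg (by push_neg; linarith), if_neg (by push_neg; linarith), if_pos c3]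
      rw [D, if_neg (by push_neg; linarith), if_pos c3]
      rw [xE (cyc s)]
    · rcases lt_or_ge (uu s) 5 with c4 | c4
      · rw [td, if_neg (by push_neg; linarith), if_neg (by push_neg; linarith),
          if_neg (by push_neg; linarith), if_pos c4]
        rw [D, if_neg (by push_neg; linarith), if_neg (by push_neg; linarith), if_pos c4]
        rw [xC (cyc s) (s - 3/2) (by linarith) (by linarith)]
        unfold P
        rw [if_pos (by linarith), hu]
        ring
      · rcases lt_or_ge (uu s) (13/2) with c5 | c5
        · rw [td, if_neg (by push_neg; linarith), if_neg (by push_neg; linarith),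
            if_neg (by push_neg; linarith), if_neg (by push_neg; linarith), if_pos c5]
          rw [D, if_neg (by push_neg; linarith), if_neg (by push_neg; linarith),
            if_neg (by push_neg; linarith), if_pos c5]
          rw [xC (cyc s) (EE (cyc s) + 5/2) (by linarith) (by linarith)]
          unfold P
          rw [if_neg (by push_neg; linarith), if_neg (by push_neg; linarith),
            if_pos (by norm_num)]
          ring_nf
        · rw [td, if_neg (by push_neg; linarith), if_neg (by push_neg; linarith),
            if_neg (by push_neg; linarith), if_neg (by push_neg; linarith),
            if_neg (by push_neg; linarith)]
          rw [D, if_neg (by push_neg; linarith), if_neg (by push_neg; linarith),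
            if_neg (by push_neg; linarith), if_neg (by push_neg; linarith)]
          rw [xC (cyc s) (s - 3/2) (by linarith) (by linarith)]
          unfold P
          rw [if_neg (by push_neg; linarith), if_neg (by push_neg; linarith),
            if_pos (by linarith), hu]
          ring

lemma x32 : xx (3/2 : ℝ) = -1/2 := by
  rw [xx, if_pos le_rfl]; norm_num [H, P]

lemma x_eq {t : ℝ} (h : 3/2 ≤ t) : xx t = xx (3/2) - ∫ s in (3/2:ℝ)..t, xx (td s) := by
  rw [xInt h, x32]
  have heq : (∫ s in (3/2:ℝ)..t, xx (td s)) = ∫ s in (3/2:ℝ)..t, -(D s) := by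
    apply intervalIntegral.integral_congr
    intro s hs
    rw [Set.uIcc_of_le h] at hs
    exact τdD hs.1
  rw [heq, intervalIntegral.integral_neg]; ring

lemma x_lip {a t : ℝ} (h1 : 3/2 ≤ a) (h2 : a ≤ t) : |xx t - xx a| ≤ t - a := by
  have hb := intervalIntegral.norm_integral_le_of_norm_le_const (a := a) (b := t) (C := 1)
    (f := D) (fun x _ => by simpa using D_bdd x)
  rw [xdiff h1 h2]
  simp only [add_sub_cancel_left]
  rw [Real.norm_eq_abs, abs_of_nonneg (by linarith : (0:ℝ) ≤ t - a)] at hb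
  calc |∫ s in a..t, D s| = ‖∫ s in a..t, D s‖ := (Real.norm_eq_abs _).symm
    _ ≤ 1 * (t - a) := hb
    _ = t - a := by ring


lemma cc_unbdd (y : ℝ) : ∃ k : ℕ, y < cc k := by
  have hrel : ∀ k : ℕ, cc k = (∑ i ∈ Finset.range (k+2), (1:ℝ)/(i+1)) - 3/2 := by
    intro k
    induction k with
    | zero => rw [cc_zero]; norm_num [Finset.sum_range_succ]
    | succ n ih =>
      have hs : (∑ i ∈ Finset.range (n+3), (1:ℝ)/(i+1))
          = (∑ i ∈ Finset.range (n+2), (1:ℝ)/(i+1)) + 1/((n:ℝ)+3) := by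
        rw [show n + 3 = (n+2)+1 from rfl, Finset.sum_range_succ]
        push_cast
        rw [show ((n:ℝ) + 2 + 1) = (n:ℝ) + 3 from by ring]
      rw [cc_succ, ih, show n + 1 + 2 = n + 3 from rfl, hs]; ring
  have := Real.tendsto_sum_range_one_div_nat_succ_atTop
  rw [Filter.tendsto_atTop] at this
  obtain ⟨N, hN⟩ := (this (y + 3/2 + 1)).exists_forall_of_atTop
  refine ⟨N, ?_⟩
  rw [hrel]
  have h1 := hN (N + 2) (by omega)
  have : (∑ i ∈ Finset.range (N+2), (1:ℝ)/(i+1)) ≥ y + 3/2 + 1 := by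
    simpa using h1
  linarith

lemma cross (y : ℝ) (hy : 0 ≤ y) : ∃ k : ℕ, cc k ≤ y ∧ y < cc (k+1) := by
  classical
  obtain ⟨m, hm⟩ := cc_unbdd y
  have hex : ∃ k : ℕ, y < cc (k+1) := ⟨m, lt_of_lt_of_le hm (cc_mono (Nat.le_succ m))⟩
  refine ⟨Nat.find hex, ?_, Nat.find_spec hex⟩
  rcases Nat.eq_zero_or_pos (Nat.find hex) with h0 | h0
  · rw [h0, cc_zero]; exact hy
  · have hlt : Nat.find hex - 1 < Nat.find hex := by omega
    have := Nat.find_min hex hlt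
    push_neg at this
    have heq : Nat.find hex - 1 + 1 = Nat.find hex := by omega
    rwa [heq] at this

lemma bigmax (A : ℝ) : ∃ s : ℝ, A ≤ s ∧ (∃ n : ℕ, s = 5*n) ∧ 5/8 ≤ xx s := by
  obtain ⟨m, hm⟩ := exists_nat_ge (max A 2)
  have hm2 : (2:ℝ) ≤ m := le_trans (le_max_right _ _) hm
  have hmA : A ≤ m := le_trans (le_max_left _ _) hm
  obtain ⟨k, hk1, hk2⟩ := cross (5*m) (by positivity)
  have hck : cc (k+1) ≤ ((k:ℝ)+1)/3 := by
    have := cc_le (k+1); push_cast at this; linarith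
  have hk15 : 15 * (m:ℝ) < (k:ℝ) + 1 := by linarith
  have hkm : (m:ℝ) ≤ (k:ℝ) + 1 := by linarith
  have hkmn : m ≤ k + 1 := by exact_mod_cast hkm
  have hkR : (29:ℝ) ≤ (k:ℝ) := by linarith
  set n : ℕ := k + 1 - m with hn_def
  have hn : (n:ℝ) = (k:ℝ) + 1 - m := by
    rw [hn_def]; push_cast [Nat.cast_sub hkmn]; ring
  have hccnn := cc_nonneg k
  have hsA : A ≤ 5*(n:ℝ) := by rw [hn]; linarith
  refine ⟨5*(n:ℝ), hsA, ⟨n, rfl⟩, ?_⟩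
  have harg : EE k + 5/2 - EE k + 5/2 = (5:ℝ) := by ring
  have hx : xx (EE k + 5/2) = MM k := by
    rw [xC k (EE k + 5/2) (by linarith) (by have := EE_step k; linarith), harg]
    norm_num [P]
  have hκ : cc (k+1) = cc k + 1/((k:ℝ)+3) := cc_succ k
  have hκ8 : 1/((k:ℝ)+3) ≤ 1/8 := by
    rw [div_le_div_iff₀ (by linarith) (by norm_num)]; linarith
  have hδ : EE k + 5/2 - 5*(n:ℝ) = 5*(m:ℝ) - cc k := by
    rw [hn]; simp only [EE]; ring
  have hδ1 : 0 ≤ EE k + 5/2 - 5*(n:ℝ) := by rw [hδ]; linarith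
  have hδ2 : EE k + 5/2 - 5*(n:ℝ) ≤ 1/8 := by rw [hδ]; linarith
  have h5n32 : (3/2:ℝ) ≤ 5*(n:ℝ) := by rw [hn]; linarith
  have hlip := x_lip h5n32 (by linarith : 5*(n:ℝ) ≤ EE k + 5/2)
  rw [hx] at hlip
  have hM := (MM_bounds k).1
  have := abs_le.mp hlip
  linarith [this.1, this.2]

lemma bigmin (A : ℝ) : ∃ s : ℝ, A ≤ s ∧ (∃ n : ℕ, s = 5*n) ∧ xx s ≤ -(5/8) := by
  obtain ⟨m, hm⟩ := exists_nat_ge (max A 2)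
  have hm2 : (2:ℝ) ≤ m := le_trans (le_max_right _ _) hm
  have hmA : A ≤ m := le_trans (le_max_left _ _) hm
  obtain ⟨k, hk1, hk2⟩ := cross (5*m + 5/2) (by positivity)
  have hck : cc (k+1) ≤ ((k:ℝ)+1)/3 := by
    have := cc_le (k+1); push_cast at this; linarith
  have hk15 : 15 * (m:ℝ) + 15/2 < (k:ℝ) + 1 := by linarith
  have hkm : (m:ℝ) ≤ (k:ℝ) := by linarith
  have hkmn : m ≤ k := by exact_mod_cast hkm
  have hkR : (29:ℝ) ≤ (k:ℝ) := by linarith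
  set n : ℕ := k - m with hn_def
  have hn : (n:ℝ) = (k:ℝ) - m := by
    rw [hn_def]; push_cast [Nat.cast_sub hkmn]; ring
  have hccnn := cc_nonneg k
  have hsA : A ≤ 5*(n:ℝ) := by rw [hn]; linarith
  refine ⟨5*(n:ℝ), hsA, ⟨n, rfl⟩, ?_⟩
  have hx : xx (EE k) = -(MM k) := xE k
  have hκ : cc (k+1) = cc k + 1/((k:ℝ)+3) := cc_succ k
  have hκ8 : 1/((k:ℝ)+3) ≤ 1/8 := by
    rw [div_le_div_iff₀ (by linarith) (by norm_num)]; linarith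
  have hδ : EE k - 5*(n:ℝ) = 5*(m:ℝ) + 5/2 - cc k := by
    rw [hn]; simp only [EE]; ring
  have hδ1 : 0 ≤ EE k - 5*(n:ℝ) := by rw [hδ]; linarith
  have hδ2 : EE k - 5*(n:ℝ) ≤ 1/8 := by rw [hδ]; linarith
  have h5n32 : (3/2:ℝ) ≤ 5*(n:ℝ) := by rw [hn]; linarith
  have hlip := x_lip h5n32 (by linarith : 5*(n:ℝ) ≤ EE k)
  rw [hx] at hlip
  have hM := (MM_bounds k).1
  have := abs_le.mp hlip
  linarith [this.1, this.2]

lemma x_osc : ∀ T : ℝ, ∃ t ≥ T, xx t = 0 := by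
  intro T
  obtain ⟨k, hk⟩ := exists_nat_ge T
  have h52 := EE_ge52 k
  have hge := EE_ge k
  refine ⟨EE k + 1, by linarith, ?_⟩
  rw [xC k (EE k + 1) (by linarith) (by have := EE_step k; linarith)]
  have harg : EE k + 1 - EE k + 5/2 = (7/2:ℝ) := by ring
  rw [harg]
  norm_num [P]

lemma limsup_pos : 0 < Filter.limsup (fun t => |xx t|) Filter.atTop := by
  have hb : Filter.IsBoundedUnder (· ≤ ·) Filter.atTop (fun t => |xx t|) :=
    ⟨1, Filter.eventually_map.mpr (Filter.Eventually.of_forall fun t => x_bdd t)⟩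
  have hfreq : ∃ᶠ t in Filter.atTop, (3/4:ℝ) ≤ |xx t| := by
    rw [Filter.frequently_atTop]
    intro a
    obtain ⟨k, hk⟩ := exists_nat_ge a
    have hge := EE_ge k
    refine ⟨EE k, by linarith, ?_⟩
    rw [xE k, abs_neg, abs_of_pos (MM_pos k)]
    exact (MM_bounds k).1
  have := Filter.le_limsup_of_frequently_le hfreq hb
  linarith

end Ctr


theorem stmt18 (ϖm : ℝ → ℝ)
    (h1 : ∀ t ∈ Icc (0:ℝ) (3/2), ϖm t = 1 - t)
    (h2 : ∀ t ∈ Icc (3/2:ℝ) (5/2), ϖm t = -1/2 - (t - 3/2) + (t - 3/2)^2 / 2)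
    (h3 : ∀ t : ℝ, ϖm t = -ϖm (t + 5/2)) :
    ∃ τd x : ℝ → ℝ, Measurable τd ∧
      (∀ t, t - 3/2 ≤ τd t ∧ τd t ≤ t) ∧
      Continuous x ∧
      (∀ t ≥ (3/2:ℝ), x t = x (3/2) - ∫ s in (3/2:ℝ)..t, x (τd s)) ∧
      Oscillatory x ∧
      (∃ B : ℝ, ∀ t, |x t| ≤ B) ∧
      0 < Filter.limsup (fun t => |x t|) Filter.atTop ∧
      ∀ c : ℝ, ¬ Filter.Tendsto
          (fun t => x t - Filter.limsup (fun s => |x s|) Filter.atTop * ϖm (t + c))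
          Filter.atTop (nhds 0) := by
  classical
  have per : ∀ y : ℝ, ϖm (y + 5) = ϖm y := by
    intro y
    have e1 := h3 y
    have e2 := h3 (y + 5/2)
    rw [show y + 5/2 + 5/2 = y + 5 from by ring] at e2
    rw [e1, e2, neg_neg]
  have pern : ∀ (n : ℕ) (y : ℝ), ϖm (5*(n:ℝ) + y) = ϖm y := by
    intro n
    induction n with
    | zero => intro y; norm_num
    | succ m ih =>
      intro y
      push_cast
      rw [show (5:ℝ)*((m:ℝ)+1) + y = (5*(m:ℝ) + y) + 5 from by ring, per, ih]
  refine ⟨Ctr.td, Ctr.xx, Ctr.td_meas, Ctr.td_window, Ctr.x_cont,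
    fun t ht => Ctr.x_eq ht, Ctr.x_osc, ⟨1, Ctr.x_bdd⟩, Ctr.limsup_pos, ?_⟩
  intro c hten
  set L := Filter.limsup (fun s => |Ctr.xx s|) Filter.atTop with hL
  rw [Metric.tendsto_nhds] at hten
  have hev := hten (1/8) (by norm_num)
  rw [Filter.eventually_atTop] at hev
  obtain ⟨T, hT⟩ := hev
  obtain ⟨s₁, hs₁T, ⟨n₁, hn₁⟩, hs₁⟩ := Ctr.bigmax T
  obtain ⟨s₂, hs₂T, ⟨n₂, hn₂⟩, hs₂⟩ := Ctr.bigmin T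
  have e₁ := hT s₁ hs₁T
  have e₂ := hT s₂ hs₂T
  rw [Real.dist_eq, sub_zero] at e₁ e₂
  have p₁ : ϖm (s₁ + c) = ϖm c := by rw [hn₁]; exact pern n₁ c
  have p₂ : ϖm (s₂ + c) = ϖm c := by rw [hn₂]; exact pern n₂ c
  rw [p₁] at e₁
  rw [p₂] at e₂
  have a₁ := abs_lt.mp e₁
  have a₂ := abs_lt.mp e₂
  linarith [a₁.1, a₁.2, a₂.1, a₂.2]

end
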